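/- For every n ≥ 6, there exists a bijective sequence a_1, ..., a_n of {1,...,n} such that |a_i - a_{i+1}| ∈ {2, 3} for all 1 ≤ i ≤ n-1 (a Hamilton path using only differences 2 and 3). -/

import Mathlib

private def Rel23 (x y : ℤ) : Prop := (x - y).natAbs = 2 ∨ (x - y).natAbs = 3

private instance : DecidableRel Rel23 := fun x y => inferInstanceAs (Decidable ((x - y).natAbs = 2 ∨ (x - y).natAbs = 3))

private lemma key : ∀ m : ℕ, ∃ l : List ℤ,
    l.length = m + 6 ∧ l.Chain' Rel23 ∧ l.Nodup ∧
    (∀ x : ℤ, x ∈ l ↔ 1 ≤ x ∧ x ≤ (m : ℤ) + 6) ∧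
    l.head? = some ((m : ℤ) + 5) ∧ l.getLast? = some ((m : ℤ) + 6) := by
  intro m
  induction m using Nat.strong_induction_on with
  | _ m ih =>
    match m with
    | 0 =>
      refine ⟨[5,2,4,1,3,6], by decide, by simp only [List.Chain', List.isChain_cons_cons, List.isChain_singleton, Rel23, and_true]; decide, by decide, ?_, by decide, by decide⟩
      intro x; simp only [List.mem_cons, List.not_mem_nil, or_false]; omega
    | 1 =>
      refine ⟨[6,3,1,4,2,5,7], by decide, by simp only [List.Chain', List.isChain_cons_cons, List.isChain_singleton, Rel23, and_true]; decide, by decide, ?_, by decide, by decide⟩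
      intro x; simp only [List.mem_cons, List.not_mem_nil, or_false]; omega
    | (m + 2) =>
      obtain ⟨l, hlen, hch, hnd, hmem, hhd, hlast⟩ := ih m (by omega)
      refine ⟨(((m : ℤ) + 7) :: l) ++ [(m : ℤ) + 8], ?_, ?_, ?_, ?_, ?_, ?_⟩
      · simp [hlen]
      · rw [List.Chain', List.isChain_append]
        refine ⟨?_, List.isChain_singleton _, ?_⟩
        · rw [List.isChain_cons]
          refine ⟨?_, hch⟩
          intro y hy
          rw [hhd, Option.mem_some_iff] at hy
          subst hy
          left; simp only [Rel23, show ((m:ℤ)+7) - ((m:ℤ)+5) = 2 by ring]; rfl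
        · intro x hx y hy
          have heq : (((m : ℤ) + 7) :: l).getLast? = l.getLast? := by
            cases l with
            | nil => simp at hhd
            | cons a t => rw [List.getLast?_cons_cons]
          rw [heq, hlast, Option.mem_some_iff] at hx
          simp only [List.head?_cons, Option.mem_some_iff] at hy
          subst hx; subst hy
          left; simp only [Rel23, show ((m:ℤ)+6) - ((m:ℤ)+8) = -2 by ring]; rfl
      · rw [List.nodup_append]
        refine ⟨List.nodup_cons.2 ⟨fun h => ?_, hnd⟩, List.nodup_singleton _, ?_⟩
        · have := (hmem _).1 h; omega
        · intro x hx y hy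
          simp only [List.mem_singleton] at hy
          subst hy
          rcases List.mem_cons.1 hx with h | h
          · omega
          · have := (hmem _).1 h; omega
      · intro x
        simp only [List.mem_append, List.mem_cons, List.mem_singleton,
          List.not_mem_nil, or_false, hmem]
        push_cast
        omega
      · rw [List.cons_append, List.head?_cons]
        exact congrArg some (by push_cast; ring)
      · rw [List.getLast?_concat]
        exact congrArg some (by push_cast; ring)

/-- For every `n ≥ 6` there is a Hamilton path of `{1,...,n}` all of whose
consecutive absolute differences are `2` or `3`. -/
theorem ham_path_diffs_two_three (n : ℕ) (hn : 6 ≤ n) :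
    ∃ a : ℕ → ℤ, Set.BijOn a (Set.Ico 0 n) (Set.Icc 1 (n : ℤ)) ∧
      ∀ i, i + 1 < n → (a i - a (i + 1)).natAbs = 2 ∨ (a i - a (i + 1)).natAbs = 3 := by
  obtain ⟨m, rfl⟩ : ∃ m, n = m + 6 := ⟨n - 6, by omega⟩
  obtain ⟨l, hlen, hch, hnd, hmem, -, -⟩ := key m
  refine ⟨fun i => l.getD i 0, ⟨?_, ?_, ?_⟩, ?_⟩
  · intro i hi
    simp only [Set.mem_Ico] at hi
    have h : i < l.length := by omega
    dsimp only
    rw [List.getD_eq_getElem _ _ h]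
    have := (hmem _).1 (l.getElem_mem h)
    simp only [Set.mem_Icc]
    push_cast
    omega
  · intro i hi j hj hij
    simp only [Set.mem_Ico] at hi hj
    have h1 : i < l.length := by omega
    have h2 : j < l.length := by omega
    dsimp only at hij
    rw [List.getD_eq_getElem _ _ h1, List.getD_eq_getElem _ _ h2] at hij
    exact (List.Nodup.getElem_inj_iff hnd).1 hij
  · intro x hx
    simp only [Set.mem_Icc] at hx
    have hxm : x ∈ l := (hmem x).2 (by push_cast at hx ⊢; omega)
    obtain ⟨i, hi, hix⟩ := List.mem_iff_getElem.1 hxm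
    exact ⟨i, Set.mem_Ico.2 ⟨Nat.zero_le _, by omega⟩, by
      dsimp only; rw [List.getD_eq_getElem _ _ hi]; exact hix⟩
  · intro i hilt
    have h1 : i < l.length := by omega
    have h2 : i + 1 < l.length := by omega
    dsimp only
    rw [List.getD_eq_getElem _ _ h1, List.getD_eq_getElem _ _ h2]
    have := List.isChain_iff_getElem.1 hch i (by omega)
    simpa [List.get_eq_getElem, Rel23] using this
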